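/- For every v ∈ ℂ and every τ in the upper half-plane H, the v-derivative of the Jacobi theta function θ₂ satisfies θ₂'(v, τ+1) = θ₃'(v, τ) and θ₂'(v, -1/τ) = (τ/i)^{1/2}·e^{π i τ v²}·(2π i τ v · θ₁(τ v, τ) + τ · θ₁'(τ v, τ)), where (τ/i)^{1/2} denotes the principal branch of the square root. -/

import Mathlib

open Complex Real Filter Finset

/-- `q = e^{2πiτ}`. -/
noncomputable def jq (τ : ℂ) : ℂ := Complex.exp (2 * (π : ℂ) * Complex.I * τ)

/-- `θ(v,τ) = 2 q^{1/8} sin(πv) ∏_{j=1}^∞ (1-q^j)(1-e^{2πiv}q^j)(1-e^{-2πiv}q^j)`. -/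
noncomputable def jTheta (v τ : ℂ) : ℂ :=
  2 * Complex.exp ((π : ℂ) * Complex.I * τ / 4) * Complex.sin ((π : ℂ) * v) *
    ∏' j : ℕ, ((1 - jq τ ^ (j + 1)) *
      (1 - Complex.exp (2 * (π : ℂ) * Complex.I * v) * jq τ ^ (j + 1)) *
      (1 - Complex.exp (-(2 * (π : ℂ) * Complex.I * v)) * jq τ ^ (j + 1)))

/-- `θ₁(v,τ) = 2 q^{1/8} cos(πv) ∏_{j=1}^∞ (1-q^j)(1+e^{2πiv}q^j)(1+e^{-2πiv}q^j)`. -/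
noncomputable def jTheta₁ (v τ : ℂ) : ℂ :=
  2 * Complex.exp ((π : ℂ) * Complex.I * τ / 4) * Complex.cos ((π : ℂ) * v) *
    ∏' j : ℕ, ((1 - jq τ ^ (j + 1)) *
      (1 + Complex.exp (2 * (π : ℂ) * Complex.I * v) * jq τ ^ (j + 1)) *
      (1 + Complex.exp (-(2 * (π : ℂ) * Complex.I * v)) * jq τ ^ (j + 1)))

/-- `θ₂(v,τ) = ∏_{j=1}^∞ (1-q^j)(1-e^{2πiv}q^{j-1/2})(1-e^{-2πiv}q^{j-1/2})`. -/
noncomputable def jTheta₂ (v τ : ℂ) : ℂ :=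
  ∏' j : ℕ, ((1 - jq τ ^ (j + 1)) *
    (1 - Complex.exp (2 * (π : ℂ) * Complex.I * v) *
      Complex.exp (2 * (π : ℂ) * Complex.I * τ * ((j : ℂ) + 1 / 2))) *
    (1 - Complex.exp (-(2 * (π : ℂ) * Complex.I * v)) *
      Complex.exp (2 * (π : ℂ) * Complex.I * τ * ((j : ℂ) + 1 / 2))))

/-- `θ₃(v,τ) = ∏_{j=1}^∞ (1-q^j)(1+e^{2πiv}q^{j-1/2})(1+e^{-2πiv}q^{j-1/2})`. -/
noncomputable def jTheta₃ (v τ : ℂ) : ℂ :=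
  ∏' j : ℕ, ((1 - jq τ ^ (j + 1)) *
    (1 + Complex.exp (2 * (π : ℂ) * Complex.I * v) *
      Complex.exp (2 * (π : ℂ) * Complex.I * τ * ((j : ℂ) + 1 / 2))) *
    (1 + Complex.exp (-(2 * (π : ℂ) * Complex.I * v)) *
      Complex.exp (2 * (π : ℂ) * Complex.I * τ * ((j : ℂ) + 1 / 2))))

/-- `θ'(v,τ)`, the partial derivative of `θ` with respect to `v`. -/
noncomputable def jTheta' (v τ : ℂ) : ℂ := deriv (fun w : ℂ => jTheta w τ) v

/-- `θ₁'(v,τ)`, the partial derivative of `θ₁` with respect to `v`. -/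
noncomputable def jTheta₁' (v τ : ℂ) : ℂ := deriv (fun w : ℂ => jTheta₁ w τ) v

/-- `θ₂'(v,τ)`, the partial derivative of `θ₂` with respect to `v`. -/
noncomputable def jTheta₂' (v τ : ℂ) : ℂ := deriv (fun w : ℂ => jTheta₂ w τ) v

/-- `θ₃'(v,τ)`, the partial derivative of `θ₃` with respect to `v`. -/
noncomputable def jTheta₃' (v τ : ℂ) : ℂ := deriv (fun w : ℂ => jTheta₃ w τ) v


namespace ThetaAux

lemma hasProd_zero_of_eq_zero {f : ℕ → ℂ} {i : ℕ} (h : f i = 0) : HasProd f 0 := by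
  have hev : ∀ᶠ s : Finset ℕ in atTop, (0 : ℂ) = ∏ j ∈ s, f j := by
    filter_upwards [eventually_ge_atTop {i}] with s hs
    exact (Finset.prod_eq_zero (hs (Finset.mem_singleton_self i)) h).symm
  exact Tendsto.congr' hev tendsto_const_nhds

lemma eventually_small {a : ℕ → ℂ} (ha : Summable a) : ∀ᶠ j in atTop, ‖a j‖ ≤ 1/2 := by
  have := NormedAddCommGroup.tendsto_nhds_zero.mp ha.tendsto_atTop_zero (1/2) (by norm_num)
  filter_upwards [this] with j hj using hj.le

lemma summable_log_one_add {a : ℕ → ℂ} (ha : Summable a) (h0 : ∀ j, 1 + a j ≠ 0) :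
    Summable (fun j => Complex.log (1 + a j)) := by
  refine Summable.of_norm_bounded_eventually (ha.norm.mul_left (3/2)) ?_
  rw [Nat.cofinite_eq_atTop]
  filter_upwards [eventually_small ha] with j hj
  exact Complex.norm_log_one_add_half_le_self hj

lemma tprod_one_add_eq {a : ℕ → ℂ} (ha : Summable a) (h0 : ∀ j, 1 + a j ≠ 0) :
    ∏' j, (1 + a j) = cexp (∑' j, Complex.log (1 + a j)) := by
  have := Complex.cexp_tsum_eq_tprod (f := fun j => 1 + a j) h0 (summable_log_one_add ha h0)
  exact this.symm

lemma tprod_one_add_ne_zero {a : ℕ → ℂ} (ha : Summable a) (h0 : ∀ j, 1 + a j ≠ 0) :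
    ∏' j, (1 + a j) ≠ 0 := by
  rw [tprod_one_add_eq ha h0]; exact Complex.exp_ne_zero _

lemma multipliable_one_add {a : ℕ → ℂ} (ha : Summable a) :
    Multipliable (fun j => 1 + a j) := by
  by_cases h0 : ∀ j, 1 + a j ≠ 0
  · exact Complex.multipliable_of_summable_log (summable_log_one_add ha h0)
  · push_neg at h0
    obtain ⟨i, hi⟩ := h0
    exact ⟨0, hasProd_zero_of_eq_zero hi⟩

lemma summable_geom_aux (c Q : ℂ) (hQ : ‖Q‖ < 1) (k m : ℕ) :
    Summable (fun j : ℕ => c * Q ^ ((k+1)*j + m)) := by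
  have h1 : Summable (fun j : ℕ => ‖c * Q ^ ((k+1)*j + m)‖) := by
    have : ∀ j : ℕ, ‖c * Q ^ ((k+1)*j + m)‖ ≤ (‖c‖ * ‖Q‖^m) * (‖Q‖^(k+1))^j := fun j =>
      le_of_eq (by rw [norm_mul, norm_pow, pow_add, pow_mul]; ring)
    refine Summable.of_nonneg_of_le (fun j => norm_nonneg _) this ?_
    refine Summable.mul_left _ (summable_geometric_of_lt_one (by positivity) ?_)
    calc ‖Q‖^(k+1) ≤ ‖Q‖^1 := pow_le_pow_of_le_one (norm_nonneg _) hQ.le (by omega)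
    _ < 1 := by simpa using hQ
  exact summable_norm_iff.mp h1


noncomputable def Df (t : ℂ) (m : ℕ) : ℂ := ∏ i ∈ Finset.range m, (1 - t^(i+1))

noncomputable def Ef (t : ℂ) (m : ℤ) : ℂ := if 0 ≤ m then (Df t m.toNat)⁻¹ else 0

noncomputable def cf (t : ℂ) (N : ℕ) (n : ℤ) : ℂ :=
  Df t (2*N) * Ef t (N + n) * Ef t (N - n)

lemma one_sub_pow_ne_zero {t : ℂ} (ht : ‖t‖ < 1) (k : ℕ) : 1 - t^(k+1) ≠ 0 := by
  intro h
  have h1 : t ^ (k+1) = 1 := by linear_combination -h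
  have h2 := congrArg norm h1
  rw [norm_pow, norm_one] at h2
  have h3 : ‖t‖ ^ (k+1) < 1 := by
    calc ‖t‖^(k+1) ≤ ‖t‖^1 := pow_le_pow_of_le_one (norm_nonneg _) ht.le (by omega)
    _ < 1 := by simpa using ht
  simp_all

lemma Df_ne_zero {t : ℂ} (ht : ‖t‖ < 1) (m : ℕ) : Df t m ≠ 0 :=
  Finset.prod_ne_zero_iff.mpr (fun i _ => one_sub_pow_ne_zero ht i)

lemma Df_zero (t : ℂ) : Df t 0 = 1 := by simp [Df]

lemma Df_succ (t : ℂ) (m : ℕ) : Df t (m+1) = Df t m * (1 - t^(m+1)) :=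
  Finset.prod_range_succ _ _

lemma Ef_coe (t : ℂ) (k : ℕ) : Ef t (k : ℤ) = (Df t k)⁻¹ := by
  simp [Ef]

lemma Ef_pred {t : ℂ} (ht : ‖t‖ < 1) (p : ℕ) :
    Ef t ((p : ℤ) - 1) = (1 - t^p) * (Df t p)⁻¹ := by
  rcases p with _ | p
  · simp [Ef]
  · rw [show ((p+1 : ℕ) : ℤ) - 1 = ((p : ℕ) : ℤ) by push_cast; ring, Ef_coe,
      Df_succ, mul_inv, ← mul_assoc, mul_comm (1 - t^(p+1)), mul_assoc,
      mul_inv_cancel₀ (one_sub_pow_ne_zero ht p)]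
    simp

lemma cf_of_gt {t : ℂ} {N : ℕ} {n : ℤ} (h : (N:ℤ) < n ∨ n < -(N:ℤ)) : cf t N n = 0 := by
  rcases h with h | h
  · rw [cf, show Ef t ((N:ℤ) - n) = 0 from if_neg (by omega), mul_zero]
  · rw [cf, show Ef t ((N:ℤ) + n) = 0 from if_neg (by omega), mul_zero, zero_mul]

lemma cf_eval (t : ℂ) (N : ℕ) (n : ℤ) (p m : ℕ) (hp : (N:ℤ) + n = p) (hm : (N:ℤ) - n = m) :
    cf t N n = Df t (2*N) * (Df t p)⁻¹ * (Df t m)⁻¹ := by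
  rw [cf, hp, hm, Ef_coe, Ef_coe]

lemma cf_eval_predL {t : ℂ} (ht : ‖t‖ < 1) (N : ℕ) (n : ℤ) (p m : ℕ)
    (hp : (N:ℤ) + n = (p:ℤ) - 1) (hm : (N:ℤ) - n = m) :
    cf t N n = Df t (2*N) * ((1 - t^p) * (Df t p)⁻¹) * (Df t m)⁻¹ := by
  rw [cf, hp, hm, Ef_pred ht, Ef_coe]

lemma cf_eval_predR {t : ℂ} (ht : ‖t‖ < 1) (N : ℕ) (n : ℤ) (p m : ℕ)
    (hp : (N:ℤ) + n = p) (hm : (N:ℤ) - n = (m:ℤ) - 1) :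
    cf t N n = Df t (2*N) * (Df t p)⁻¹ * ((1 - t^m) * (Df t m)⁻¹) := by
  rw [cf, hp, hm, Ef_pred ht, Ef_coe]

lemma cf_rec {t : ℂ} (ht : ‖t‖ < 1) (N : ℕ) (n : ℤ) :
    cf t (N+1) n = (1 + t^(2*N+1)) * cf t N n
      + t ^ ((N:ℤ) + 1 - n) * cf t N (n-1) + t ^ ((N:ℤ) + 1 + n) * cf t N (n+1) := by
  rcases lt_or_ge ((N:ℤ)+1) n with h | h
  · rw [cf_of_gt (t := t) (N := N+1) (n := n) (Or.inl (by push_cast; omega)),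
      cf_of_gt (t := t) (N := N) (n := n) (Or.inl (by omega)),
      cf_of_gt (t := t) (N := N) (n := n-1) (Or.inl (by omega)),
      cf_of_gt (t := t) (N := N) (n := n+1) (Or.inl (by omega))]
    ring
  rcases lt_or_ge n (-((N:ℤ)+1)) with h' | h'
  · rw [cf_of_gt (t := t) (N := N+1) (n := n) (Or.inr (by push_cast; omega)),
      cf_of_gt (t := t) (N := N) (n := n) (Or.inr (by omega)),
      cf_of_gt (t := t) (N := N) (n := n-1) (Or.inr (by omega)),
      cf_of_gt (t := t) (N := N) (n := n+1) (Or.inr (by omega))]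
    ring
  by_cases hP : n = (N:ℤ)+1
  · subst hP
    rw [cf_eval t (N+1) ((N:ℤ)+1) (2*(N+1)) 0 (by push_cast; ring) (by push_cast; ring),
      cf_eval t N ((N:ℤ)+1-1) (2*N) 0 (by push_cast; ring) (by push_cast; ring),
      cf_of_gt (t := t) (N := N) (n := (N:ℤ)+1) (Or.inl (by omega)),
      cf_of_gt (t := t) (N := N) (n := (N:ℤ)+1+1) (Or.inl (by omega)),
      show (N:ℤ) + 1 - ((N:ℤ)+1) = 0 by ring, zpow_zero]
    simp [Df_zero, mul_inv_cancel₀ (Df_ne_zero ht (2*(N+1))),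
      mul_inv_cancel₀ (Df_ne_zero ht (2*N))]
  by_cases hM : n = -((N:ℤ)+1)
  · subst hM
    rw [cf_eval t (N+1) (-((N:ℤ)+1)) 0 (2*(N+1)) (by push_cast; ring) (by push_cast; ring),
      cf_eval t N (-((N:ℤ)+1)+1) 0 (2*N) (by push_cast; ring) (by push_cast; ring),
      cf_of_gt (t := t) (N := N) (n := -((N:ℤ)+1)) (Or.inr (by omega)),
      cf_of_gt (t := t) (N := N) (n := -((N:ℤ)+1)-1) (Or.inr (by omega)),
      show (N:ℤ) + 1 + (-((N:ℤ)+1)) = 0 by ring, zpow_zero]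
    simp [Df_zero, mul_inv_cancel₀ (Df_ne_zero ht (2*(N+1))),
      mul_inv_cancel₀ (Df_ne_zero ht (2*N))]
  · -- interior : -N ≤ n ≤ N
    obtain ⟨p, hp⟩ : ∃ p : ℕ, (p : ℤ) = (N:ℤ) + n :=
      ⟨((N:ℤ)+n).toNat, Int.toNat_of_nonneg (by omega)⟩
    obtain ⟨m, hm⟩ : ∃ m : ℕ, (m : ℤ) = (N:ℤ) - n :=
      ⟨((N:ℤ)-n).toNat, Int.toNat_of_nonneg (by omega)⟩
    have hpm : 2*N = p + m := by omega
    rw [cf_eval t (N+1) n (p+1) (m+1) (by push_cast; omega) (by push_cast; omega),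
      cf_eval t N n p m (by omega) (by omega),
      cf_eval_predL ht N (n-1) p (m+1) (by push_cast; omega) (by push_cast; omega),
      cf_eval_predR ht N (n+1) (p+1) m (by push_cast; omega) (by push_cast; omega),
      show (N:ℤ) + 1 - n = ((m+1 : ℕ) : ℤ) by push_cast; omega,
      show (N:ℤ) + 1 + n = ((p+1 : ℕ) : ℤ) by push_cast; omega,
      zpow_natCast, zpow_natCast, hpm,
      show 2*(N+1) = (p + m) + 1 + 1 by omega,
      Df_succ t ((p+m)+1), Df_succ t (p+m), Df_succ t p, Df_succ t m,
      show t^(p+m+1) = t^p * t^m * t by rw [pow_succ, pow_add],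
      show t^(p+m+1+1) = t^p * t^m * t^2 by
        rw [show p+m+1+1 = (p+m)+2 by omega, pow_add, pow_add],
      show t^(p+1) = t^p * t by rw [pow_succ],
      show t^(m+1) = t^m * t by rw [pow_succ]]
    have h1 : 1 - t^p * t ≠ 0 := by
      have := one_sub_pow_ne_zero ht p; rwa [pow_succ] at this
    have h2 : 1 - t^m * t ≠ 0 := by
      have := one_sub_pow_ne_zero ht m; rwa [pow_succ] at this
    simp only [mul_inv]
    have hC : (1 - t^p*t) * (1 - t^p*t)⁻¹ = 1 := mul_inv_cancel₀ h1
    have hD : (1 - t^m*t) * (1 - t^m*t)⁻¹ = 1 := mul_inv_cancel₀ h2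
    linear_combination (Df t (p+m) * (Df t p)⁻¹ * (Df t m)⁻¹ *
        ((1 + t^p*t^m*t) * (1 - t^m*t) * (1 - t^m*t)⁻¹ + t^m*t*(1-t^p)*(1 - t^m*t)⁻¹)) * hC
      + (Df t (p+m) * (Df t p)⁻¹ * (Df t m)⁻¹ *
        ((1 + t^p*t^m*t) + t^p*t*(1-t^m)*(1 - t^p*t)⁻¹)) * hD

lemma zpow_sq_aux {Q : ℂ} (a : ℤ) : (Q^2 : ℂ)^a = Q^(2*a) := by
  rw [← zpow_natCast Q 2, ← zpow_mul]
  norm_num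

lemma step_key {Q x : ℂ} (hQ : ‖Q‖ < 1) (hQ0 : Q ≠ 0) (N : ℕ) (n : ℤ) :
    cf (Q^2) (N+1) n * Q^(n^2) * x^n
      = (1 + (Q^2)^(2*N+1)) * (cf (Q^2) N n * Q^(n^2) * x^n)
        + Q^(2*N+1) * (cf (Q^2) N (n-1) * Q^((n-1)^2) * x^n)
        + Q^(2*N+1) * (cf (Q^2) N (n+1) * Q^((n+1)^2) * x^n) := by
  have ht : ‖(Q^2 : ℂ)‖ < 1 := by
    rw [norm_pow]
    exact pow_lt_one₀ (norm_nonneg _) hQ (by omega)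
  have key1 : ((Q^2 : ℂ))^((N:ℤ)+1-n) * Q^(n^2) = Q^((2*N+1 : ℕ) : ℤ) * Q^((n-1)^2) := by
    rw [zpow_sq_aux, ← zpow_add₀ hQ0, ← zpow_add₀ hQ0]
    congr 1
    push_cast
    ring
  have key2 : ((Q^2 : ℂ))^((N:ℤ)+1+n) * Q^(n^2) = Q^((2*N+1 : ℕ) : ℤ) * Q^((n+1)^2) := by
    rw [zpow_sq_aux, ← zpow_add₀ hQ0, ← zpow_add₀ hQ0]
    congr 1
    push_cast
    ring
  rw [cf_rec ht N n]
  rw [zpow_natCast Q (2*N+1)] at key1 key2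
  calc ((1 + (Q^2)^(2*N+1)) * cf (Q^2) N n + (Q^2) ^ ((N:ℤ) + 1 - n) * cf (Q^2) N (n-1)
        + (Q^2) ^ ((N:ℤ) + 1 + n) * cf (Q^2) N (n+1)) * Q^(n^2) * x^n
      = (1 + (Q^2)^(2*N+1)) * (cf (Q^2) N n * Q^(n^2) * x^n)
        + cf (Q^2) N (n-1) * ((Q^2) ^ ((N:ℤ) + 1 - n) * Q^(n^2)) * x^n
        + cf (Q^2) N (n+1) * ((Q^2) ^ ((N:ℤ) + 1 + n) * Q^(n^2)) * x^n := by ring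
    _ = _ := by rw [key1, key2]; ring

lemma fin_identity {Q x : ℂ} (hQ : ‖Q‖ < 1) (hQ0 : Q ≠ 0) (hx : x ≠ 0) (N : ℕ) :
    ∏ j ∈ Finset.range N, ((1 + x * Q^(2*j+1)) * (1 + x⁻¹ * Q^(2*j+1)))
      = ∑ n ∈ Finset.Icc (-(N:ℤ)) N, cf (Q^2) N n * Q^(n^2) * x^n := by
  have ht : ‖(Q^2 : ℂ)‖ < 1 := by
    rw [norm_pow]
    exact pow_lt_one₀ (norm_nonneg _) hQ (by omega)
  induction N with
  | zero => norm_num [cf, Ef, Df]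
  | succ N ih =>
    rw [Finset.prod_range_succ, ih]
    have hsub : Finset.Icc (-(N:ℤ)) (N:ℤ) ⊆ Finset.Icc (-((N:ℕ)+1:ℤ)) ((N:ℕ)+1:ℤ) :=
      Finset.Icc_subset_Icc (by omega) (by omega)
    -- the right-hand side, term by term via the recurrence
    have E0 : ∑ n ∈ Finset.Icc (-((N+1:ℕ)):ℤ) ((N+1:ℕ):ℤ), cf (Q^2) (N+1) n * Q^(n^2) * x^n
        = (1 + (Q^2)^(2*N+1)) * (∑ n ∈ Finset.Icc (-((N+1:ℕ)):ℤ) ((N+1:ℕ):ℤ),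
            cf (Q^2) N n * Q^(n^2) * x^n)
          + Q^(2*N+1) * (∑ n ∈ Finset.Icc (-((N+1:ℕ)):ℤ) ((N+1:ℕ):ℤ),
            cf (Q^2) N (n-1) * Q^((n-1)^2) * x^n)
          + Q^(2*N+1) * (∑ n ∈ Finset.Icc (-((N+1:ℕ)):ℤ) ((N+1:ℕ):ℤ),
            cf (Q^2) N (n+1) * Q^((n+1)^2) * x^n) := by
      rw [Finset.mul_sum, Finset.mul_sum, Finset.mul_sum, ← Finset.sum_add_distrib,
        ← Finset.sum_add_distrib]
      exact Finset.sum_congr rfl (fun n _ => step_key hQ hQ0 N n)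
    have E1 : ∑ n ∈ Finset.Icc (-((N+1:ℕ)):ℤ) ((N+1:ℕ):ℤ), cf (Q^2) N n * Q^(n^2) * x^n
        = ∑ n ∈ Finset.Icc (-(N:ℤ)) (N:ℤ), cf (Q^2) N n * Q^(n^2) * x^n := by
      refine (Finset.sum_subset (by push_cast at hsub ⊢; exact hsub) ?_).symm
      intro n hn hns
      simp only [Finset.mem_Icc] at hn hns
      rw [cf_of_gt (by omega), zero_mul, zero_mul]
    have E2 : ∑ n ∈ Finset.Icc (-((N+1:ℕ)):ℤ) ((N+1:ℕ):ℤ), cf (Q^2) N (n-1) * Q^((n-1)^2) * x^n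
        = (∑ n ∈ Finset.Icc (-(N:ℤ)) (N:ℤ), cf (Q^2) N n * Q^(n^2) * x^n) * x := by
      rw [Finset.sum_mul]
      have hm : Finset.Icc (-(N:ℤ)+1) ((N:ℤ)+1)
          = (Finset.Icc (-(N:ℤ)) (N:ℤ)).map (addRightEmbedding 1) := by
        rw [Finset.map_add_right_Icc]
      have e1 : ∑ n ∈ Finset.Icc (-(N:ℤ)+1) ((N:ℤ)+1), cf (Q^2) N (n-1) * Q^((n-1)^2) * x^n
          = ∑ n ∈ Finset.Icc (-(N:ℤ)) (N:ℤ), cf (Q^2) N n * Q^(n^2) * x^n * x := by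
        rw [hm, Finset.sum_map]
        refine Finset.sum_congr rfl (fun n _ => ?_)
        simp only [addRightEmbedding_apply]
        rw [show n + 1 - 1 = n by ring, zpow_add₀ hx n 1, zpow_one]
        ring
      rw [← e1]
      refine (Finset.sum_subset (Finset.Icc_subset_Icc (by push_cast; omega)
        (by push_cast; omega)) ?_).symm
      intro n hn hns
      simp only [Finset.mem_Icc] at hn hns
      rw [cf_of_gt (by omega), zero_mul, zero_mul]
    have E3 : ∑ n ∈ Finset.Icc (-((N+1:ℕ)):ℤ) ((N+1:ℕ):ℤ), cf (Q^2) N (n+1) * Q^((n+1)^2) * x^n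
        = (∑ n ∈ Finset.Icc (-(N:ℤ)) (N:ℤ), cf (Q^2) N n * Q^(n^2) * x^n) * x⁻¹ := by
      rw [Finset.sum_mul]
      have hm : Finset.Icc (-(N:ℤ)-1) ((N:ℤ)-1)
          = (Finset.Icc (-(N:ℤ)) (N:ℤ)).map (addRightEmbedding (-1)) := by
        rw [Finset.map_add_right_Icc]
        norm_num
        constructor <;> ring
      have e1 : ∑ n ∈ Finset.Icc (-(N:ℤ)-1) ((N:ℤ)-1), cf (Q^2) N (n+1) * Q^((n+1)^2) * x^n
          = ∑ n ∈ Finset.Icc (-(N:ℤ)) (N:ℤ), cf (Q^2) N n * Q^(n^2) * x^n * x⁻¹ := by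
        rw [hm, Finset.sum_map]
        refine Finset.sum_congr rfl (fun n _ => ?_)
        simp only [addRightEmbedding_apply]
        rw [show n + -1 + 1 = n by ring, show n + -1 = n - 1 by ring, zpow_sub₀ hx n 1, zpow_one]
        ring
      rw [← e1]
      refine (Finset.sum_subset (Finset.Icc_subset_Icc (by push_cast; omega)
        (by push_cast; omega)) ?_).symm
      intro n hn hns
      simp only [Finset.mem_Icc] at hn hns
      rw [cf_of_gt (by omega), zero_mul, zero_mul]
    rw [E0, E1, E2, E3]
    have hxx : x * x⁻¹ = 1 := mul_inv_cancel₀ hx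
    set S := ∑ n ∈ Finset.Icc (-(N:ℤ)) (N:ℤ), cf (Q^2) N n * Q^(n^2) * x^n with hS
    calc S * ((1 + x * Q^(2*N+1)) * (1 + x⁻¹ * Q^(2*N+1)))
        = S * (1 + (x*x⁻¹) * (Q^(2*N+1)*Q^(2*N+1)) + Q^(2*N+1) * x + Q^(2*N+1) * x⁻¹) := by ring
      _ = S * (1 + (Q^2)^(2*N+1) + Q^(2*N+1) * x + Q^(2*N+1) * x⁻¹) := by
          rw [hxx, one_mul, ← pow_add, ← pow_mul']
          ring_nf
      _ = _ := by ring

section Bounds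

variable {t : ℂ}

/-- Upper bound for the partial products. -/
lemma Df_norm_le (ht : ‖t‖ < 1) (m : ℕ) :
    ‖Df t m‖ ≤ Real.exp (∑' i : ℕ, ‖t‖^(i+1)) := by
  have hsum : Summable (fun i : ℕ => ‖t‖^(i+1)) := by
    have := (summable_geometric_of_lt_one (norm_nonneg t) ht).mul_left ‖t‖
    refine this.congr (fun i => ?_)
    rw [← pow_succ']
  calc ‖Df t m‖ ≤ ∏ i ∈ Finset.range m, ‖1 - t^(i+1)‖ := norm_prod_le _ _
    _ ≤ ∏ i ∈ Finset.range m, Real.exp (‖t‖^(i+1)) := by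
        refine Finset.prod_le_prod (fun i _ => norm_nonneg _) (fun i _ => ?_)
        calc ‖1 - t^(i+1)‖ ≤ ‖(1:ℂ)‖ + ‖t^(i+1)‖ := norm_sub_le _ _
          _ = ‖t‖^(i+1) + 1 := by rw [norm_one, norm_pow]; ring
          _ ≤ Real.exp (‖t‖^(i+1)) := Real.add_one_le_exp _
    _ = Real.exp (∑ i ∈ Finset.range m, ‖t‖^(i+1)) := (Real.exp_sum _ _).symm
    _ ≤ Real.exp (∑' i : ℕ, ‖t‖^(i+1)) := by
        refine Real.exp_le_exp.mpr (Summable.sum_le_tsum _ (fun i _ => by positivity) hsum)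

/-- Uniform positive lower bound for the partial products. -/
lemma Df_norm_ge (ht : ‖t‖ < 1) :
    ∃ LB : ℝ, 0 < LB ∧ ∀ m, LB ≤ ‖Df t m‖ := by
  have hsum : Summable (fun i : ℕ => ‖t‖^(i+1)) := by
    have := (summable_geometric_of_lt_one (norm_nonneg t) ht).mul_left ‖t‖
    refine this.congr (fun i => ?_)
    rw [← pow_succ']
  set R : ℝ := ∑' i : ℕ, ‖t‖^(i+1) with hR
  have hR0 : 0 ≤ R := tsum_nonneg (fun i => by positivity)
  -- choose M beyond which the factors are ≥ 1/2 in the log sense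
  obtain ⟨M, hM⟩ : ∃ M : ℕ, ∀ i ≥ M, ‖t‖^(i+1) ≤ 1/2 := by
    have h := tendsto_pow_atTop_nhds_zero_of_lt_one (norm_nonneg t) ht
    have h2 := (NormedAddCommGroup.tendsto_nhds_zero.mp (tendsto_norm_zero.comp h)) (1/2)
      (by norm_num)
    obtain ⟨M, hM⟩ := Filter.eventually_atTop.mp h2
    exact ⟨M, fun i hi => by
      have := hM (i+1) (by omega)
      simpa [_root_.abs_of_nonneg (pow_nonneg (norm_nonneg t) _)] using this.le⟩
  set δ : ℝ := (Finset.range (M+1)).inf' Finset.nonempty_range_add_one (fun m => ‖Df t m‖) with hδ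
  have hδpos : 0 < δ := by
    rw [hδ, Finset.lt_inf'_iff]
    exact fun m _ => norm_pos_iff.mpr (Df_ne_zero ht m)
  refine ⟨δ * Real.exp (-(3/2) * R), by positivity, fun m => ?_⟩
  rcases le_or_gt m M with hm | hm
  · calc δ * Real.exp (-(3/2) * R) ≤ δ * 1 := by
          refine mul_le_mul_of_nonneg_left ?_ hδpos.le
          rw [Real.exp_le_one_iff]
          nlinarith
      _ ≤ ‖Df t m‖ := by
          rw [mul_one]
          exact Finset.inf'_le _ (Finset.mem_range.mpr (by omega))
  · have hsplit : Df t m = Df t M * ∏ i ∈ Finset.Ico M m, (1 - t^(i+1)) := by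
      rw [Df, Df, Finset.prod_range_mul_prod_Ico _ hm.le]
    have hlog : ∀ i ∈ Finset.Ico M m, (1 - t^(i+1)) = cexp (Complex.log (1 - t^(i+1))) :=
      fun i _ => (Complex.exp_log (one_sub_pow_ne_zero ht i)).symm
    have hP : ∏ i ∈ Finset.Ico M m, (1 - t^(i+1))
        = cexp (∑ i ∈ Finset.Ico M m, Complex.log (1 - t^(i+1))) := by
      rw [Finset.prod_congr rfl hlog, Complex.exp_sum]
    have hnormlog : ‖∑ i ∈ Finset.Ico M m, Complex.log (1 - t^(i+1))‖ ≤ (3/2) * R := by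
      calc ‖∑ i ∈ Finset.Ico M m, Complex.log (1 - t^(i+1))‖
          ≤ ∑ i ∈ Finset.Ico M m, ‖Complex.log (1 - t^(i+1))‖ := norm_sum_le _ _
        _ ≤ ∑ i ∈ Finset.Ico M m, (3/2) * ‖t‖^(i+1) := by
            refine Finset.sum_le_sum (fun i hi => ?_)
            have hi' : M ≤ i := (Finset.mem_Ico.mp hi).1
            have := Complex.norm_log_one_add_half_le_self (z := -(t^(i+1)))
              (by rw [norm_neg, norm_pow]; exact hM i hi')
            rw [← sub_eq_add_neg] at this
            rw [norm_neg, norm_pow] at this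
            exact this
        _ = (3/2) * ∑ i ∈ Finset.Ico M m, ‖t‖^(i+1) := by rw [Finset.mul_sum]
        _ ≤ (3/2) * R := by
            refine mul_le_mul_of_nonneg_left ?_ (by norm_num)
            exact Summable.sum_le_tsum _ (fun i _ => by positivity) hsum
    have hPge : Real.exp (-(3/2) * R) ≤ ‖∏ i ∈ Finset.Ico M m, (1 - t^(i+1))‖ := by
      rw [hP, Complex.norm_exp]
      refine Real.exp_le_exp.mpr ?_
      have h := Complex.abs_re_le_norm (∑ i ∈ Finset.Ico M m, Complex.log (1 - t^(i+1)))
      have h2 := (abs_le.mp h).1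
      calc -(3/2) * R = -((3/2) * R) := by ring
        _ ≤ -‖∑ i ∈ Finset.Ico M m, Complex.log (1 - t^(i+1))‖ := by linarith
        _ ≤ _ := h2
    calc δ * Real.exp (-(3/2) * R)
        ≤ ‖Df t M‖ * ‖∏ i ∈ Finset.Ico M m, (1 - t^(i+1))‖ := by
          refine mul_le_mul ?_ hPge (Real.exp_pos _).le (norm_nonneg _)
          exact Finset.inf'_le _ (Finset.mem_range.mpr (by omega))
      _ = ‖Df t m‖ := by rw [hsplit, norm_mul]

end Bounds

lemma Ef_norm_le {t : ℂ} {LB : ℝ} (hLB : 0 < LB) (h : ∀ m, LB ≤ ‖Df t m‖)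
    (k : ℤ) : ‖Ef t k‖ ≤ LB⁻¹ := by
  rw [Ef]
  split_ifs
  · rw [norm_inv]
    exact inv_anti₀ hLB (h _)
  · rw [norm_zero]
    positivity

theorem triple_product {Q x : ℂ} (hQ : ‖Q‖ < 1) (hQ0 : Q ≠ 0) (hx : x ≠ 0)
    (hsum : Summable (fun n : ℤ => x^n * Q^(n^2))) :
    ∑' n : ℤ, x^n * Q^(n^2)
      = ∏' j : ℕ, ((1 - (Q^2)^(j+1)) * (1 + x * Q^(2*j+1)) * (1 + x⁻¹ * Q^(2*j+1))) := by
  have ht : ‖(Q^2:ℂ)‖ < 1 := by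
    rw [norm_pow]; exact pow_lt_one₀ (norm_nonneg _) hQ two_ne_zero
  have ht0 : (Q^2 : ℂ) ≠ 0 := pow_ne_zero _ hQ0
  -- summability of the "one plus" perturbations
  have s1 : Summable (fun j : ℕ => x * Q^(2*j+1)) := by
    have := summable_geom_aux x Q hQ 1 1
    refine this.congr (fun j => ?_)
    norm_num
  have s2 : Summable (fun j : ℕ => x⁻¹ * Q^(2*j+1)) := by
    have := summable_geom_aux x⁻¹ Q hQ 1 1
    refine this.congr (fun j => ?_)
    norm_num
  have sD : Summable (fun j : ℕ => -((Q^2:ℂ)^(j+1))) := by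
    have := summable_geom_aux (-1) (Q^2) ht 0 1
    refine this.congr (fun j => ?_)
    norm_num
  have MD : Multipliable (fun j : ℕ => 1 - (Q^2:ℂ)^(j+1)) :=
    (multipliable_one_add sD).congr (fun j => by rw [← sub_eq_add_neg])
  have Mf : Multipliable (fun j : ℕ => 1 + x*Q^(2*j+1)) := multipliable_one_add s1
  have Mg : Multipliable (fun j : ℕ => 1 + x⁻¹*Q^(2*j+1)) := multipliable_one_add s2
  have Mfg : HasProd (fun j : ℕ => (1 + x*Q^(2*j+1)) * (1 + x⁻¹*Q^(2*j+1)))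
      ((∏' j : ℕ, (1 + x*Q^(2*j+1))) * (∏' j : ℕ, (1 + x⁻¹*Q^(2*j+1)))) :=
    Mf.hasProd.mul Mg.hasProd
  set PA : ℂ := (∏' j : ℕ, (1 + x*Q^(2*j+1))) * (∏' j : ℕ, (1 + x⁻¹*Q^(2*j+1))) with hPA
  set Dinf : ℂ := ∏' j : ℕ, (1 - (Q^2:ℂ)^(j+1)) with hDinf
  have hD0 : Dinf ≠ 0 := by
    have h1 := tprod_one_add_ne_zero sD
      (fun j => by rw [← sub_eq_add_neg]; exact one_sub_pow_ne_zero ht j)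
    have h2 : ∏' j : ℕ, (1 + -((Q^2:ℂ)^(j+1))) = Dinf :=
      tprod_congr (fun j => by rw [← sub_eq_add_neg])
    rw [h2] at h1
    exact h1
  have hDtend : Filter.Tendsto (fun m => Df (Q^2) m) Filter.atTop (nhds Dinf) :=
    MD.hasProd.tendsto_prod_nat
  obtain ⟨LB, hLB, hLBle⟩ := Df_norm_ge ht
  set R : ℝ := ∑' i : ℕ, ‖(Q^2:ℂ)‖^(i+1) with hR
  set K : ℝ := Real.exp R * (LB⁻¹ * LB⁻¹) with hK
  -- the three ingredients of Tannery's theorem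
  have hTsum : ∀ N : ℕ, ∑' n : ℤ, (cf (Q^2) N n * Q^(n^2) * x^n)
      = ∏ j ∈ Finset.range N, ((1 + x * Q^(2*j+1)) * (1 + x⁻¹ * Q^(2*j+1))) := by
    intro N
    rw [fin_identity hQ hQ0 hx N]
    refine tsum_eq_sum (fun n hn => ?_)
    simp only [Finset.mem_Icc] at hn
    rw [cf_of_gt (by omega), zero_mul, zero_mul]
  have hptw : ∀ n : ℤ, Filter.Tendsto (fun N => cf (Q^2) N n * Q^(n^2) * x^n) Filter.atTop
      (nhds (Dinf⁻¹ * (x^n * Q^(n^2)))) := by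
    intro n
    have t1 : Filter.Tendsto (fun N : ℕ => Df (Q^2) (2*N)) Filter.atTop (nhds Dinf) :=
      hDtend.comp (Filter.tendsto_atTop_mono (fun N => by simp only [id_eq]; omega)
        Filter.tendsto_id)
    have taux : ∀ c : ℤ, Filter.Tendsto (fun N : ℕ => Ef (Q^2) ((N:ℤ) + c)) Filter.atTop
        (nhds Dinf⁻¹) := by
      intro c
      have hnat : Filter.Tendsto (fun N : ℕ => ((N:ℤ) + c).toNat) Filter.atTop Filter.atTop :=
        Filter.tendsto_atTop.mpr (fun b => Filter.eventually_atTop.mpr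
          ⟨b + c.natAbs, fun N hN => by omega⟩)
      have heq : ∀ᶠ N : ℕ in Filter.atTop, (Df (Q^2) (((N:ℤ) + c).toNat))⁻¹
          = Ef (Q^2) ((N:ℤ) + c) := by
        filter_upwards [Filter.eventually_ge_atTop c.natAbs] with N hN
        rw [Ef, if_pos (by omega)]
      exact Filter.Tendsto.congr' heq ((hDtend.comp hnat).inv₀ hD0)
    have t2 := taux n
    have t3 : Filter.Tendsto (fun N : ℕ => Ef (Q^2) ((N:ℤ) - n)) Filter.atTop
        (nhds Dinf⁻¹) := by
      have := taux (-n)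
      refine this.congr (fun N => ?_)
      rw [sub_eq_add_neg]
    have := ((t1.mul t2).mul t3).mul_const (Q^(n^2) : ℂ)
    have h2 := this.mul_const (x^n : ℂ)
    have h3 : Dinf * Dinf⁻¹ * Dinf⁻¹ * Q^(n^2) * x^n = Dinf⁻¹ * (x^n * Q^(n^2)) := by
      rw [mul_inv_cancel₀ hD0]
      ring
    rw [h3] at h2
    refine h2.congr (fun N => ?_)
    rw [cf]
  have hbound : ∀ (N : ℕ) (n : ℤ), ‖cf (Q^2) N n * Q^(n^2) * x^n‖ ≤ K * ‖x^n * Q^(n^2)‖ := by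
    intro N n
    have hc : ‖cf (Q^2) N n‖ ≤ K := by
      rw [cf, hK]
      calc ‖Df (Q^2) (2*N) * Ef (Q^2) ((N:ℤ)+n) * Ef (Q^2) ((N:ℤ)-n)‖
          = ‖Df (Q^2) (2*N)‖ * ‖Ef (Q^2) ((N:ℤ)+n)‖ * ‖Ef (Q^2) ((N:ℤ)-n)‖ := by
            rw [norm_mul, norm_mul]
        _ ≤ Real.exp R * (LB⁻¹ * LB⁻¹) := by
            rw [mul_assoc]
            refine mul_le_mul (Df_norm_le ht (2*N)) ?_ (by positivity) (Real.exp_pos _).le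
            exact mul_le_mul (Ef_norm_le hLB hLBle _) (Ef_norm_le hLB hLBle _)
              (norm_nonneg _) (by positivity)
    calc ‖cf (Q^2) N n * Q^(n^2) * x^n‖ = ‖cf (Q^2) N n‖ * ‖x^n * Q^(n^2)‖ := by
          rw [norm_mul, norm_mul, norm_mul]; ring
      _ ≤ K * ‖x^n * Q^(n^2)‖ := by
          exact mul_le_mul_of_nonneg_right hc (norm_nonneg _)
  have hbsum : Summable (fun n : ℤ => K * ‖x^n * Q^(n^2)‖) :=
    (summable_norm_iff.mpr hsum).mul_left K
  have tan := tendsto_tsum_of_dominated_convergence hbsum hptw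
    (Filter.Eventually.of_forall hbound)
  rw [funext hTsum] at tan
  have hgsum : ∑' n : ℤ, Dinf⁻¹ * (x^n * Q^(n^2)) = Dinf⁻¹ * ∑' n : ℤ, x^n * Q^(n^2) :=
    tsum_mul_left
  rw [hgsum] at tan
  have hPAlim := Mfg.tendsto_prod_nat
  have hkey : PA = Dinf⁻¹ * ∑' n : ℤ, x^n * Q^(n^2) := tendsto_nhds_unique hPAlim tan
  have hfinal := MD.hasProd.mul Mfg
  have htp : ∏' j : ℕ, ((1 - (Q^2:ℂ)^(j+1)) * (1 + x * Q^(2*j+1)) * (1 + x⁻¹ * Q^(2*j+1)))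
      = Dinf * PA := by
    rw [← hfinal.tprod_eq]
    exact tprod_congr (fun j => (mul_assoc _ _ _))
  rw [htp, hkey, ← mul_assoc, mul_inv_cancel₀ hD0, one_mul]

lemma hasProd_nat_succ {f : ℕ → ℂ} (hf : Multipliable (fun j => f (j+1))) :
    HasProd f (f 0 * ∏' j, f (j+1)) := by
  let e : ℕ ≃ ({0}ᶜ : Set ℕ) :=
    ⟨fun n => ⟨n+1, by simp⟩, fun x => x.1 - 1, fun n => by simp,
     fun x => by
      obtain ⟨m, hm⟩ := x
      simp only [Set.mem_compl_iff, Set.mem_singleton_iff] at hm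
      ext; simp; omega⟩
  have h2 : HasProd (fun (x : ({0}ᶜ : Set ℕ)) => f x) (∏' j, f (j+1)) := by
    refine (Equiv.hasProd_iff e).mp ?_
    have := hf.hasProd
    rwa [show ((fun (x : ({0}ᶜ : Set ℕ)) => f x) ∘ ⇑e) = (fun j => f (j+1)) from
      funext fun n => rfl]
  exact (hasProd_singleton 0 f).mul_compl h2

open Real in
lemma norm_Q_lt_one {τ : ℂ} (hτ : 0 < τ.im) : ‖cexp ((π:ℂ)*I*τ)‖ < 1 := by
  rw [Complex.norm_exp]
  have h : ((π:ℂ)*I*τ).re = -(π * τ.im) := by simp [Complex.mul_re, Complex.mul_im]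
  rw [h, Real.exp_lt_one_iff]
  nlinarith [Real.pi_pos]

open Real in
lemma jq_eq_sq (τ : ℂ) : jq τ = (cexp ((π:ℂ)*I*τ))^2 := by
  rw [jq, ← Complex.exp_nat_mul]
  congr 1
  push_cast
  ring

open Real in
lemma exp_odd (τ : ℂ) (j : ℕ) :
    cexp (2*(π:ℂ)*I*τ*((j:ℂ)+1/2)) = (cexp ((π:ℂ)*I*τ))^(2*j+1) := by
  rw [← Complex.exp_nat_mul]
  congr 1
  push_cast
  ring

open Real in
/-- The Jacobi triple product, in the form of the `jacobiTheta₂` series. -/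
lemma series_eq_prod {τ : ℂ} (hτ : 0 < τ.im) (w : ℂ) :
    jacobiTheta₂ w τ = ∏' j : ℕ, ((1 - ((cexp ((π:ℂ)*I*τ))^2) ^ (j+1))
      * (1 + cexp (2*(π:ℂ)*I*w) * (cexp ((π:ℂ)*I*τ))^(2*j+1))
      * (1 + cexp (-(2*(π:ℂ)*I*w)) * (cexp ((π:ℂ)*I*τ))^(2*j+1))) := by
  set Q : ℂ := cexp ((π:ℂ)*I*τ) with hQdef
  have hQ : ‖Q‖ < 1 := norm_Q_lt_one hτ
  have hQ0 : Q ≠ 0 := Complex.exp_ne_zero _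
  set x : ℂ := cexp (2*(π:ℂ)*I*w) with hxdef
  have hx : x ≠ 0 := Complex.exp_ne_zero _
  have hxinv : cexp (-(2*(π:ℂ)*I*w)) = x⁻¹ := by rw [hxdef, ← Complex.exp_neg]
  have hterm : ∀ n : ℤ, jacobiTheta₂_term n w τ = x^n * Q^(n^2) := by
    intro n
    rw [jacobiTheta₂_term,
      show 2*(π:ℂ)*I*(n:ℂ)*w + (π:ℂ)*I*(n:ℂ)^2*τ
        = (n:ℂ)*(2*(π:ℂ)*I*w) + ((n^2 : ℤ):ℂ)*((π:ℂ)*I*τ) by push_cast; ring,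
      Complex.exp_add, Complex.exp_int_mul, Complex.exp_int_mul]
  have hsum : Summable (fun n : ℤ => x^n * Q^(n^2)) := by
    refine (((summable_jacobiTheta₂_term_iff w τ).mpr hτ).congr (fun n => hterm n))
  rw [jacobiTheta₂, tsum_congr hterm, triple_product hQ hQ0 hx hsum]
  exact tprod_congr (fun j => by rw [hxinv])

open Real in
lemma jTheta₃_eq {τ : ℂ} (hτ : 0 < τ.im) (v : ℂ) : jTheta₃ v τ = jacobiTheta₂ v τ := by
  rw [series_eq_prod hτ v, jTheta₃]
  exact tprod_congr (fun j => by rw [jq_eq_sq, exp_odd])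

open Real in
lemma jTheta₂_eq {τ : ℂ} (hτ : 0 < τ.im) (v : ℂ) :
    jTheta₂ v τ = jacobiTheta₂ (v + 1/2) τ := by
  rw [series_eq_prod hτ (v + 1/2), jTheta₂]
  have h1 : cexp (2*(π:ℂ)*I*(v+1/2)) = -cexp (2*(π:ℂ)*I*v) := by
    rw [show 2*(π:ℂ)*I*(v+1/2) = 2*(π:ℂ)*I*v + π*I by ring, Complex.exp_add,
      Complex.exp_pi_mul_I]
    ring
  have h2 : cexp (-(2*(π:ℂ)*I*(v+1/2))) = -cexp (-(2*(π:ℂ)*I*v)) := by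
    have hk : cexp (-((π:ℂ)*I)) = -1 := by
      rw [Complex.exp_neg, Complex.exp_pi_mul_I]
      norm_num
    rw [show -(2*(π:ℂ)*I*(v+1/2)) = -(2*(π:ℂ)*I*v) + -((π:ℂ)*I) by ring, Complex.exp_add, hk]
    ring
  refine tprod_congr (fun j => ?_)
  rw [jq_eq_sq, exp_odd, h1, h2]
  ring

open Real in
lemma jTheta₁_eq {τ : ℂ} (hτ : 0 < τ.im) (v : ℂ) :
    jTheta₁ v τ = cexp ((π:ℂ)*I*τ/4 + (π:ℂ)*I*v) * jacobiTheta₂ (v + τ/2) τ := by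
  set Q : ℂ := cexp ((π:ℂ)*I*τ) with hQdef
  have hQ : ‖Q‖ < 1 := norm_Q_lt_one hτ
  have hQ0 : Q ≠ 0 := Complex.exp_ne_zero _
  have ht : ‖(Q^2:ℂ)‖ < 1 := by
    rw [norm_pow]; exact pow_lt_one₀ (norm_nonneg _) hQ two_ne_zero
  set e : ℂ := cexp (2*(π:ℂ)*I*v) with hedef
  have he0 : e ≠ 0 := Complex.exp_ne_zero _
  have hx : cexp (2*(π:ℂ)*I*(v + τ/2)) = e * Q := by
    rw [hedef, hQdef, ← Complex.exp_add]
    congr 1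
    ring
  have hxinv : cexp (-(2*(π:ℂ)*I*(v + τ/2))) = e⁻¹ * Q⁻¹ := by
    rw [hedef, hQdef, ← Complex.exp_neg, ← Complex.exp_neg, ← Complex.exp_add]
    congr 1
    ring
  have hexpneg : cexp (-(2*(π:ℂ)*I*v)) = e⁻¹ := by rw [hedef, ← Complex.exp_neg]
  -- multipliable families
  have M1 : Multipliable (fun j : ℕ => 1 - (Q^2:ℂ)^(j+1)) := by
    refine (multipliable_one_add (a := fun j => -((Q^2:ℂ)^(j+1))) ?_).congr
      (fun j => by rw [← sub_eq_add_neg])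
    refine (summable_geom_aux (-1) (Q^2) ht 0 1).congr (fun j => by norm_num)
  have M2 : Multipliable (fun j : ℕ => 1 + e * (Q^2:ℂ)^(j+1)) := by
    refine multipliable_one_add ((summable_geom_aux e (Q^2) ht 0 1).congr (fun j => by norm_num))
  have M3 : Multipliable (fun j : ℕ => 1 + e⁻¹ * (Q^2:ℂ)^(j+1)) := by
    refine multipliable_one_add ((summable_geom_aux e⁻¹ (Q^2) ht 0 1).congr (fun j => by norm_num))
  have M3' : Multipliable (fun j : ℕ => 1 + e⁻¹ * (Q^2:ℂ)^j) := by
    refine multipliable_one_add ((summable_geom_aux e⁻¹ (Q^2) ht 0 0).congr (fun j => by norm_num))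
  -- split the series-side product
  have split1 : jacobiTheta₂ (v + τ/2) τ
      = (∏' j : ℕ, (1 - (Q^2:ℂ)^(j+1))) * (∏' j : ℕ, (1 + e * (Q^2:ℂ)^(j+1)))
        * (∏' j : ℕ, (1 + e⁻¹ * (Q^2:ℂ)^j)) := by
    rw [series_eq_prod hτ (v + τ/2)]
    rw [← ((M1.hasProd.mul M2.hasProd).mul M3'.hasProd).tprod_eq]
    refine tprod_congr (fun j => ?_)
    rw [hx, hxinv]
    have hp1 : e * Q * Q^(2*j+1) = e * (Q^2:ℂ)^(j+1) := by
      rw [← pow_mul]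
      rw [show 2*(j+1) = (2*j+1)+1 by omega, pow_succ]
      ring
    have hp2 : e⁻¹ * Q⁻¹ * Q^(2*j+1) = e⁻¹ * (Q^2:ℂ)^j := by
      rw [← pow_mul, show 2*j+1 = (2*j)+1 by omega, pow_succ]
      field_simp
    rw [hp1, hp2]
  -- peel off the first factor of the third product
  have split2 : (∏' j : ℕ, (1 + e⁻¹ * (Q^2:ℂ)^j))
      = (1 + e⁻¹) * ∏' j : ℕ, (1 + e⁻¹ * (Q^2:ℂ)^(j+1)) := by
    have h := hasProd_nat_succ (f := fun j : ℕ => 1 + e⁻¹ * (Q^2:ℂ)^j) (by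
      refine M3.congr (fun j => rfl))
    rw [h.tprod_eq]
    simp
  -- product side of jTheta₁
  have split3 : jTheta₁ v τ = 2 * cexp ((π:ℂ)*I*τ/4) * Complex.cos ((π:ℂ)*v) *
      ((∏' j : ℕ, (1 - (Q^2:ℂ)^(j+1))) * (∏' j : ℕ, (1 + e * (Q^2:ℂ)^(j+1)))
        * (∏' j : ℕ, (1 + e⁻¹ * (Q^2:ℂ)^(j+1)))) := by
    rw [jTheta₁, ← ((M1.hasProd.mul M2.hasProd).mul M3.hasProd).tprod_eq]
    congr 1
    refine tprod_congr (fun j => ?_)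
    rw [jq_eq_sq, hexpneg, ← hedef]
  -- scalar identity
  have scalar : cexp ((π:ℂ)*I*τ/4 + (π:ℂ)*I*v) * (1 + e⁻¹)
      = 2 * cexp ((π:ℂ)*I*τ/4) * Complex.cos ((π:ℂ)*v) := by
    rw [Complex.exp_add]
    have hc : Complex.cos ((π:ℂ)*v) * 2 = cexp (((π:ℂ)*v)*I) + cexp (-(((π:ℂ)*v)*I)) := by
      rw [Complex.cos]; ring
    have h3 : cexp ((π:ℂ)*I*v) * (1 + e⁻¹) = cexp (((π:ℂ)*v)*I) + cexp (-(((π:ℂ)*v)*I)) := by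
      rw [← hexpneg, mul_add, mul_one, ← Complex.exp_add]
      congr 1
      · congr 1
        ring
      · congr 1
        ring
    rw [mul_assoc, h3]
    rw [show (2 : ℂ) * cexp ((π:ℂ)*I*τ/4) * Complex.cos ((π:ℂ)*v)
      = cexp ((π:ℂ)*I*τ/4) * (Complex.cos ((π:ℂ)*v) * 2) by ring, hc]
  rw [split3, split1, split2]
  rw [← scalar]
  ring

lemma jTheta₃'_eq {τ : ℂ} (hτ : 0 < τ.im) (v : ℂ) : jTheta₃' v τ = jacobiTheta₂' v τ := by
  rw [jTheta₃', funext (fun w => jTheta₃_eq hτ w), (hasDerivAt_jacobiTheta₂_fst v hτ).deriv]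

lemma jTheta₂'_eq {τ : ℂ} (hτ : 0 < τ.im) (v : ℂ) :
    jTheta₂' v τ = jacobiTheta₂' (v + 1/2) τ := by
  rw [jTheta₂', funext (fun w => jTheta₂_eq hτ w)]
  have hd : HasDerivAt (fun w : ℂ => jacobiTheta₂ (w + 1/2) τ) (jacobiTheta₂' (v + 1/2) τ) v := by
    have h := (hasDerivAt_jacobiTheta₂_fst (v + 1/2) hτ).comp v
      ((hasDerivAt_id v).add_const (1/2 : ℂ))
    simpa [Function.comp_def] using h
  exact hd.deriv

open Real in
lemma jTheta₁'_eq {τ : ℂ} (hτ : 0 < τ.im) (v : ℂ) :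
    jTheta₁' v τ = cexp ((π:ℂ)*I*τ/4 + (π:ℂ)*I*v) *
      ((π:ℂ)*I * jacobiTheta₂ (v + τ/2) τ + jacobiTheta₂' (v + τ/2) τ) := by
  rw [jTheta₁', funext (fun w => jTheta₁_eq hτ w)]
  have h1 : HasDerivAt (fun w : ℂ => cexp ((π:ℂ)*I*τ/4 + (π:ℂ)*I*w))
      ((π:ℂ)*I * cexp ((π:ℂ)*I*τ/4 + (π:ℂ)*I*v)) v := by
    have hlin : HasDerivAt (fun w : ℂ => (π:ℂ)*I*τ/4 + (π:ℂ)*I*w) ((π:ℂ)*I) v := by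
      simpa using ((hasDerivAt_id v).const_mul ((π:ℂ)*I)).const_add ((π:ℂ)*I*τ/4)
    simpa [mul_comm] using hlin.cexp
  have h2 : HasDerivAt (fun w : ℂ => jacobiTheta₂ (w + τ/2) τ)
      (jacobiTheta₂' (v + τ/2) τ) v := by
    have h := (hasDerivAt_jacobiTheta₂_fst (v + τ/2) hτ).comp v
      ((hasDerivAt_id v).add_const (τ/2 : ℂ))
    simpa [Function.comp_def] using h
  rw [(show HasDerivAt (fun w : ℂ => cexp ((π:ℂ)*I*τ/4 + (π:ℂ)*I*w) * jacobiTheta₂ (w + τ/2) τ) _ v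
    from h1.mul h2).deriv]
  ring

open Real in
lemma part1 (v τ : ℂ) : jTheta₂ v (τ+1) = jTheta₃ v τ := by
  rw [jTheta₂, jTheta₃]
  refine tprod_congr (fun j => ?_)
  have hq : jq (τ+1) = jq τ := by
    rw [jq, jq, show 2*(π:ℂ)*I*(τ+1) = 2*(π:ℂ)*I*τ + 2*(π:ℂ)*I by ring, Complex.exp_add,
      Complex.exp_two_pi_mul_I, mul_one]
  have ho : cexp (2*(π:ℂ)*I*(τ+1)*((j:ℂ)+1/2)) = -cexp (2*(π:ℂ)*I*τ*((j:ℂ)+1/2)) := by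
    rw [show 2*(π:ℂ)*I*(τ+1)*((j:ℂ)+1/2)
        = 2*(π:ℂ)*I*τ*((j:ℂ)+1/2) + (((j:ℤ):ℂ)*(2*(π:ℂ)*I) + (π:ℂ)*I) by push_cast; ring,
      Complex.exp_add, Complex.exp_add, Complex.exp_int_mul_two_pi_mul_I,
      Complex.exp_pi_mul_I]
    ring
  rw [hq, ho]
  ring

open Real in
lemma part2 {τ : ℂ} (hτ : 0 < τ.im) (v : ℂ) :
    jTheta₂' v (-1 / τ) = (τ / I) ^ ((1:ℂ)/2) * cexp ((π:ℂ)*I*τ*v^2) *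
      (2*(π:ℂ)*I*τ*v * jTheta₁ (τ*v) τ + τ * jTheta₁' (τ*v) τ) := by
  have hτ0 : τ ≠ 0 := by
    intro h
    rw [h] at hτ
    simp at hτ
  have hτ' : 0 < (-1/τ).im := by
    rw [div_eq_mul_inv, neg_one_mul, neg_im, inv_im, neg_div, neg_neg]
    exact div_pos hτ (normSq_pos.mpr hτ0)
  have hback : -1/(-1/τ) = τ := by field_simp
  have hI : I ≠ 0 := I_ne_zero
  rw [jTheta₂'_eq hτ' v, jacobiTheta₂'_functional_equation (v+1/2) (-1/τ), hback,
    show (v+1/2)/(-1/τ) = -(τ*v + τ/2) by field_simp,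
    jacobiTheta₂'_neg_left, jacobiTheta₂_neg_left,
    jTheta₁_eq hτ (τ*v), jTheta₁'_eq hτ (τ*v)]
  have hpow : (1:ℂ)/(-I*(-1/τ))^((1:ℂ)/2) = (τ/I)^((1:ℂ)/2) := by
    have h1 : -I*(-1/τ) = (τ/I)⁻¹ := by
      field_simp
    have hre : (τ/I).re = τ.im := by
      rw [div_eq_mul_inv, Complex.inv_I]
      simp [Complex.mul_re]
    have harg : (τ/I).arg ≠ π := by
      intro h
      rw [Complex.arg_eq_pi_iff] at h
      rw [hre] at h
      exact absurd h.1 (not_lt.mpr hτ.le)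
    rw [h1, Complex.inv_cpow _ _ harg, one_div, inv_inv]
  have hexp : cexp (-(π:ℂ)*I*(v+1/2)^2/(-1/τ))
      = cexp ((π:ℂ)*I*τ*v^2) * cexp ((π:ℂ)*I*τ/4 + (π:ℂ)*I*(τ*v)) := by
    rw [← Complex.exp_add]
    congr 1
    field_simp
    ring
  rw [hpow, hexp]
  set A := jacobiTheta₂ (τ*v+τ/2) τ
  set B := jacobiTheta₂' (τ*v+τ/2) τ
  field_simp
  ring

end ThetaAux

theorem stmt7 (v τ : ℂ) (hτ : 0 < τ.im) :
    jTheta₂' v (τ + 1) = jTheta₃' v τ ∧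
    jTheta₂' v (-1 / τ) =
      (τ / Complex.I) ^ ((1 : ℂ) / 2) *
        Complex.exp ((π : ℂ) * Complex.I * τ * v ^ 2) *
        (2 * (π : ℂ) * Complex.I * τ * v * jTheta₁ (τ * v) τ + τ * jTheta₁' (τ * v) τ) := by
  constructor
  · rw [jTheta₂', jTheta₃', funext (fun w => ThetaAux.part1 w τ)]
  · have h := ThetaAux.part2 hτ v
    convert h using 2 <;> ring
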